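/- arXiv:2110.11873 — 2 statements merged into one kernel-verified Lean document; each statement's English description precedes it below -/
import Mathlib

section
/- Let A be an invertible N×N matrix over ℂ, b ∈ ℂ^N, and let g be the degree of the minimal polynomial of b with respect to A. Then the solution x = A⁻¹b of the linear system Ax = b belongs to the Krylov subspace K_g(A, b). -/
open Matrix Polynomial

/-- The n-th Krylov subspace K_n(A, b) = span{b, Ab, A²b, …, A^{n−1}b}. -/
noncomputable def krylov {N : ℕ} (A : Matrix (Fin N) (Fin N) ℂ) (b : Fin N → ℂ) (n : ℕ) :
    Submodule ℂ (Fin N → ℂ) :=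
  Submodule.span ℂ {v | ∃ i < n, v = (A ^ i) *ᵥ b}

lemma aeval_mulVec_mem_krylov {N : ℕ} (A : Matrix (Fin N) (Fin N) ℂ) (b : Fin N → ℂ)
    (q : Polynomial ℂ) (n : ℕ) (hq : q.natDegree < n) :
    (Polynomial.aeval A q) *ᵥ b ∈ krylov A b n := by
  have hsum : ∀ (s : Finset ℕ) (f : ℕ → Matrix (Fin N) (Fin N) ℂ),
      (∑ i ∈ s, f i) *ᵥ b = ∑ i ∈ s, f i *ᵥ b := by
    intro s f
    induction s using Finset.cons_induction with
    | empty => simp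
    | cons a s ha ih => rw [Finset.sum_cons, Finset.sum_cons, Matrix.add_mulVec, ih]
  rw [Polynomial.aeval_eq_sum_range, hsum]
  apply Submodule.sum_mem
  intro i hi
  rw [Matrix.smul_mulVec]
  apply Submodule.smul_mem
  apply Submodule.subset_span
  exact ⟨i, lt_of_lt_of_le (Finset.mem_range.mp hi) hq, rfl⟩

/-- For an invertible matrix A and g the degree of the minimal
polynomial of b with respect to A, the solution x = A⁻¹b of Ax = b belongs to
K_g(A, b). -/
theorem solution_mem_krylov_g
    {N : ℕ} (A : Matrix (Fin N) (Fin N) ℂ) (hA : IsUnit A.det) (b : Fin N → ℂ)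
    (p : Polynomial ℂ) (hmonic : p.Monic)
    (hann : (Polynomial.aeval A p) *ᵥ b = 0)
    (hmin : ∀ q : Polynomial ℂ, q.Monic → (Polynomial.aeval A q) *ᵥ b = 0 →
      p.natDegree ≤ q.natDegree)
    (g : ℕ) (hg : g = p.natDegree) :
    A⁻¹ *ᵥ b ∈ krylov A b g := by
  have hAinj : Function.Injective (A.mulVec) :=
    Matrix.mulVec_injective_iff_isUnit.2 ((Matrix.isUnit_iff_isUnit_det A).2 hA)
  have hcomm : ∀ q : Polynomial ℂ, A * (Polynomial.aeval A q) = (Polynomial.aeval A q) * A := by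
    intro q
    calc A * Polynomial.aeval A q = Polynomial.aeval A (X * q) := by rw [_root_.map_mul, aeval_X]
      _ = Polynomial.aeval A (q * X) := by rw [mul_comm]
      _ = Polynomial.aeval A q * A := by rw [_root_.map_mul, aeval_X]
  rcases Nat.eq_zero_or_pos g with hg0 | hgpos
  · -- g = 0 : p = 1, so b = 0
    have hp1 : p = 1 := hmonic.natDegree_eq_zero.mp (by rw [← hg, hg0])
    have hb : b = 0 := by simpa [hp1] using hann
    simp [hb, Matrix.mulVec_zero, Submodule.zero_mem]
  · set q := p.divX with hq
    set c := p.coeff 0 with hc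
    have hdecomp : q * X + C c = p := p.divX_mul_X_add
    have hqdeg : q.natDegree = g - 1 := by rw [hq, Polynomial.natDegree_divX_eq_natDegree_tsub_one, hg]
    have hc0 : c ≠ 0 := by
      intro h
      have hp : p = X * q := by
        rw [← hdecomp, h, map_zero, add_zero, mul_comm]
      have hq0 : (Polynomial.aeval A q) *ᵥ b = 0 := by
        apply hAinj
        have hpq : Polynomial.aeval A p = A * Polynomial.aeval A q := by
          rw [hp, _root_.map_mul, aeval_X]
        show A *ᵥ _ = A *ᵥ _
        rw [Matrix.mulVec_zero, Matrix.mulVec_mulVec, ← hpq, hann]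
      have hqmonic : q.Monic := by
        have : p.leadingCoeff = q.leadingCoeff := by
          rw [hp, mul_comm, Polynomial.leadingCoeff_mul_X]
        rw [Polynomial.Monic, ← this]; exact hmonic
      have := hmin q hqmonic hq0
      rw [hqdeg, ← hg] at this
      omega
    -- key identity : (A * aeval A q) *ᵥ b = -c • b
    have hkey : (A * Polynomial.aeval A q) *ᵥ b = (-c) • b := by
      have : (Polynomial.aeval A q * A + c • 1) *ᵥ b = 0 := by
        rw [← hann, ← hdecomp]
        rw [map_add, _root_.map_mul, aeval_X, aeval_C]
        simp [Algebra.algebraMap_eq_smul_one]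
      rw [hcomm]
      rw [Matrix.add_mulVec] at this
      have h2 : (Polynomial.aeval A q * A) *ᵥ b = -((c • (1 : Matrix (Fin N) (Fin N) ℂ)) *ᵥ b) := by
        linear_combination (norm := module) this
      rw [h2, Matrix.smul_mulVec, Matrix.one_mulVec, neg_smul]
    have hsol : A⁻¹ *ᵥ b = (-c⁻¹) • ((Polynomial.aeval A q) *ᵥ b) := by
      apply hAinj
      show A *ᵥ _ = A *ᵥ _
      rw [Matrix.mulVec_mulVec, Matrix.mul_nonsing_inv A hA, Matrix.one_mulVec,
        Matrix.mulVec_smul, Matrix.mulVec_mulVec, hkey, smul_smul]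
      field_simp
      rw [one_smul]
    rw [hsol]
    exact Submodule.smul_mem _ _ (aeval_mulVec_mem_krylov A b q g (by omega))
end

section
/- Let A be an invertible N×N matrix over ℂ, b ∈ ℂ^N, and let g be the degree of the minimal polynomial of b with respect to A. Then the minimum over z ∈ K_g(A, b) of the Euclidean norm ‖b − Az‖₂ equals 0; i.e., there exists z ∈ K_g(A, b) with Az = b. In particular, the GMRES method, which at iteration n returns the minimizer of ‖b − Az‖₂ over z ∈ K_n(A, b), produces the exact solution in at most g iterations. -/
open Matrix Polynomial

/-- The Euclidean norm ‖v‖₂ on ℂ^N. -/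
noncomputable def eNorm {N : ℕ} (v : Fin N → ℂ) : ℝ :=
  Real.sqrt (∑ i, ‖v i‖ ^ 2)

lemma sum_mulVec' {N : ℕ} {s : Finset ℕ} (f : ℕ → Matrix (Fin N) (Fin N) ℂ) (b : Fin N → ℂ) :
    (∑ i ∈ s, f i) *ᵥ b = ∑ i ∈ s, (f i) *ᵥ b := by
  ext j
  simp only [Matrix.mulVec, dotProduct, Matrix.sum_apply, Finset.sum_apply, Finset.sum_mul]
  rw [Finset.sum_comm]

lemma aeval_mulVec {N : ℕ} (A : Matrix (Fin N) (Fin N) ℂ) (b : Fin N → ℂ) (q : Polynomial ℂ) :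
    (Polynomial.aeval A q) *ᵥ b = ∑ i ∈ Finset.range (q.natDegree + 1), q.coeff i • ((A ^ i) *ᵥ b) := by
  rw [Polynomial.aeval_eq_sum_range, sum_mulVec']
  simp [Matrix.smul_mulVec]

lemma aeval_mem_krylov {N : ℕ} (A : Matrix (Fin N) (Fin N) ℂ) (b : Fin N → ℂ)
    (q : Polynomial ℂ) (g : ℕ) (hq : q.natDegree < g) :
    (Polynomial.aeval A q) *ᵥ b ∈ krylov A b g := by
  rw [aeval_mulVec]
  refine Submodule.sum_mem _ fun i hi => Submodule.smul_mem _ _ (Submodule.subset_span ?_)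
  exact ⟨i, by simp at hi; omega, rfl⟩

/-- For an invertible matrix A and g the degree of the minimal
polynomial of b with respect to A, there exists z ∈ K_g(A, b) with Az = b, and the
minimum over z ∈ K_g(A, b) of ‖b − Az‖₂ equals 0; hence GMRES, which minimizes
‖b − Az‖₂ over z ∈ K_n(A, b) at iteration n, produces the exact solution in at
most g iterations. -/
theorem gmres_exact_in_g_iterations
    {N : ℕ} (A : Matrix (Fin N) (Fin N) ℂ) (hA : IsUnit A.det) (b : Fin N → ℂ)
    (p : Polynomial ℂ) (hmonic : p.Monic)
    (hann : (Polynomial.aeval A p) *ᵥ b = 0)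
    (hmin : ∀ q : Polynomial ℂ, q.Monic → (Polynomial.aeval A q) *ᵥ b = 0 →
      p.natDegree ≤ q.natDegree)
    (g : ℕ) (hg : g = p.natDegree) :
    (∃ z ∈ krylov A b g, A *ᵥ z = b) ∧
    IsLeast {r : ℝ | ∃ z ∈ krylov A b g, r = eNorm (b - A *ᵥ z)} 0 := by
  have hAinj : ∀ x : Fin N → ℂ, A *ᵥ x = 0 → x = 0 := by
    intro x hx
    have : A⁻¹ *ᵥ (A *ᵥ x) = x := by
      rw [Matrix.mulVec_mulVec, Matrix.nonsing_inv_mul A hA, Matrix.one_mulVec]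
    rw [hx, Matrix.mulVec_zero] at this
    exact this.symm
  have key : ∃ z ∈ krylov A b g, A *ᵥ z = b := by
    rcases Nat.eq_zero_or_pos g with h0 | hpos
    · -- p = 1, so b = 0
      have hp1 : p = 1 := hmonic.natDegree_eq_zero.mp (by omega)
      have hb : b = 0 := by simpa [hp1] using hann
      exact ⟨0, Submodule.zero_mem _, by simp [hb]⟩
    · set c := p.coeff 0 with hc_def
      have hc : c ≠ 0 := by
        intro h0
        obtain ⟨q, hq⟩ := (Polynomial.X_dvd_iff).mpr h0
        have hqmonic : q.Monic := by
          have := hmonic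
          rw [hq] at this
          exact monic_X.of_mul_monic_left this
        have hq0 : q ≠ 0 := hqmonic.ne_zero
        have hdeg : p.natDegree = q.natDegree + 1 := by
          rw [hq, natDegree_mul X_ne_zero hq0, natDegree_X]; omega
        have hqann : (Polynomial.aeval A q) *ᵥ b = 0 := by
          apply hAinj
          rw [Matrix.mulVec_mulVec]
          have : A * (Polynomial.aeval A q) = Polynomial.aeval A p := by
            rw [hq, _root_.map_mul, aeval_X]
          rw [this, hann]
        have := hmin q hqmonic hqann
        omega
      obtain ⟨q, hq⟩ := (Polynomial.X_dvd_iff (f := p - C c)).mpr (by simp [hc_def])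
      have hpeq : p = X * q + C c := by rw [← hq]; ring
      have hqdeg : q.natDegree < g := by
        rcases eq_or_ne q 0 with rfl | hq0
        · simpa using hpos
        · have h1 : (p - C c).natDegree ≤ g := by
            rw [hg]
            exact le_trans (natDegree_sub_le _ _) (by simp)
          rw [hq, natDegree_mul X_ne_zero hq0, natDegree_X] at h1
          omega
      have hAq : A *ᵥ ((Polynomial.aeval A q) *ᵥ b) + c • b = 0 := by
        have : (Polynomial.aeval A p) *ᵥ b
            = A *ᵥ ((Polynomial.aeval A q) *ᵥ b) + c • b := by
          rw [hpeq, map_add, _root_.map_mul, aeval_X, aeval_C, Matrix.add_mulVec,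
            Matrix.mulVec_mulVec]
          congr 1
          rw [Algebra.algebraMap_eq_smul_one, Matrix.smul_mulVec,
            Matrix.one_mulVec]
        rw [← this, hann]
      refine ⟨(-c⁻¹) • ((Polynomial.aeval A q) *ᵥ b),
        Submodule.smul_mem _ _ (aeval_mem_krylov A b q g hqdeg), ?_⟩
      rw [Matrix.mulVec_smul]
      have : A *ᵥ ((Polynomial.aeval A q) *ᵥ b) = -(c • b) := by
        rw [eq_neg_iff_add_eq_zero]; exact hAq
      rw [this]
      rw [smul_neg, ← neg_smul, neg_neg, smul_smul, inv_mul_cancel₀ hc, one_smul]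
  obtain ⟨z, hz, hAz⟩ := key
  refine ⟨⟨z, hz, hAz⟩, ⟨⟨z, hz, ?_⟩, ?_⟩⟩
  · rw [hAz]; simp [eNorm]
  · rintro r ⟨z', _, rfl⟩
    exact Real.sqrt_nonneg _
end
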